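/- The free Lie algebra on a set is residually nilpotent: the intersection of the terms of the lower central series of the free Lie algebra over a field on any type of generators is zero. -/
import Mathlib

open Polynomial TensorProduct

noncomputable section

namespace FreeLieResNil

attribute [local instance 10000] LieAlgebra.ExtendScalars.instBracketTensorProduct
  LieAlgebra.ExtendScalars.instLieRingModule LieAlgebra.ExtendScalars.instLieModule
  LieAlgebra.ExtendScalars.instLieRing LieAlgebra.ExtendScalars.instLieAlgebra

variable (K : Type) [Field K] (σ : Type)

local notation "𝕃" => FreeLieAlgebra K σ
local notation "𝔸" => (Polynomial K ⊗[K] FreeLieAlgebra K σ)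

theorem key (a : 𝔸) (p : Polynomial K) (w : 𝔸) : ⁅a, p • w⁆ = p • ⁅a, w⁆ := lie_smul p a w

theorem key2 (a : 𝔸) (p : Polynomial K) (w : 𝔸) : ⁅p • a, w⁆ = p • ⁅a, w⁆ := smul_lie p a w

theorem key3 (k : K) (p : Polynomial K) (w : 𝔸) : p • (k • w) = k • (p • w) := smul_comm _ _ _

instance : LieAlgebra K 𝔸 where
  lie_smul k x y := by
    rw [← algebraMap_smul (Polynomial K) k y, ← algebraMap_smul (Polynomial K) k ⁅x, y⁆]
    exact lie_smul _ x y

/-- Degree filtration: multiples of `X ^ m`. -/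
def J (m : ℕ) : LieIdeal K 𝔸 where
  carrier := {v | ∃ w, (Polynomial.X ^ m : Polynomial K) • w = v}
  zero_mem' := ⟨0, smul_zero _⟩
  add_mem' := by
    rintro u v ⟨w, hw⟩ ⟨w', hw'⟩
    exact ⟨w + w', by rw [smul_add, hw, hw']⟩
  smul_mem' := by
    rintro k v ⟨w, hw⟩
    exact ⟨k • w, by rw [key3 K σ k, hw]⟩
  lie_mem := by
    rintro a v ⟨w, hw⟩
    exact ⟨⁅a, w⁆, by rw [← key K σ a, hw]⟩

theorem mem_J {m : ℕ} {v : 𝔸} :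
    v ∈ J K σ m ↔ ∃ w, (Polynomial.X ^ m : Polynomial K) • w = v := Iff.rfl

theorem J_bracket {a b : ℕ} {u v : 𝔸} (hu : u ∈ J K σ a) (hv : v ∈ J K σ b) :
    ⁅u, v⁆ ∈ J K σ (a + b) := by
  obtain ⟨w, hw⟩ := hu
  obtain ⟨w', hw'⟩ := hv
  refine ⟨⁅w, w'⁆, ?_⟩
  rw [← hw, ← hw', key, key2, smul_smul, ← pow_add, add_comm b a]

theorem J_antitone {m : ℕ} : J K σ (m + 1) ≤ J K σ m := by
  rintro v ⟨w, hw⟩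
  exact ⟨(Polynomial.X : Polynomial K) • w, by rw [smul_smul, ← pow_succ, hw]⟩

/-- The scaling morphism sending a generator `x` to `X ⊗ x`. -/
def Φ : 𝕃 →ₗ⁅K⁆ 𝔸 :=
  FreeLieAlgebra.lift K fun x => (Polynomial.X : Polynomial K) ⊗ₜ FreeLieAlgebra.of K x

theorem Φ_of (x : σ) : Φ K σ (FreeLieAlgebra.of K x)
    = (Polynomial.X : Polynomial K) ⊗ₜ FreeLieAlgebra.of K x :=
  FreeLieAlgebra.lift_of_apply _ _

theorem X_smul_tmul (y : 𝕃) :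
    (Polynomial.X ^ 1 : Polynomial K) • ((1 : Polynomial K) ⊗ₜ[K] y : 𝔸)
      = (Polynomial.X : Polynomial K) ⊗ₜ[K] y := by
  rw [smul_tmul', smul_eq_mul, pow_one, mul_one]

/-- `J 1` as a Lie subalgebra. -/
def S : LieSubalgebra K 𝔸 :=
  { (J K σ 1).toSubmodule with
    lie_mem' := fun hu hv => J_antitone K σ (J_bracket K σ hu hv) }

theorem Φ_mem_J1 (x : 𝕃) : Φ K σ x ∈ J K σ 1 := by
  let Φ' : 𝕃 →ₗ⁅K⁆ S K σ :=
    FreeLieAlgebra.lift K fun x =>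
      ⟨(Polynomial.X : Polynomial K) ⊗ₜ FreeLieAlgebra.of K x,
        ⟨1 ⊗ₜ FreeLieAlgebra.of K x, X_smul_tmul K σ _⟩⟩
  have h : (S K σ).incl.comp Φ' = Φ K σ := by
    apply (FreeLieAlgebra.lift K).symm.injective
    ext y
    simp only [FreeLieAlgebra.lift_symm_apply, LieHom.coe_comp, Function.comp_apply]
    rw [FreeLieAlgebra.lift_of_apply, Φ_of]
    rfl
  have h2 : Φ K σ x = (S K σ).incl (Φ' x) := by rw [← h]; rfl
  rw [h2]
  exact (Φ' x).2

theorem Φ_lcs (m : ℕ) :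
    LieModule.lowerCentralSeries K 𝕃 𝕃 m ≤ LieIdeal.comap (Φ K σ) (J K σ (m + 1)) := by
  induction m with
  | zero => exact fun x _ => Φ_mem_J1 K σ x
  | succ m ih =>
    rw [LieModule.lowerCentralSeries_succ]
    rw [LieSubmodule.lie_le_iff]
    intro a _ b hb
    rw [LieIdeal.mem_comap, LieHom.map_lie]
    have h := J_bracket K σ (Φ_mem_J1 K σ a) (ih hb)
    rwa [add_comm] at h

/-- Coefficient extraction. -/
def c (n : ℕ) : 𝔸 →ₗ[K] 𝕃 :=
  TensorProduct.lift ((LinearMap.lsmul K 𝕃).comp (Polynomial.lcoeff K n))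

theorem c_tmul (n : ℕ) (p : Polynomial K) (y : 𝕃) :
    c K σ n (p ⊗ₜ y) = p.coeff n • y := rfl

theorem c_J {n m : ℕ} (h : n < m) {v : 𝔸} (hv : v ∈ J K σ m) : c K σ n v = 0 := by
  obtain ⟨w, hw⟩ := hv
  rw [← hw]; clear hw
  induction w using TensorProduct.induction_on with
  | zero => rw [smul_zero, map_zero]
  | tmul p y =>
    have hs : (Polynomial.X ^ m : Polynomial K) • (p ⊗ₜ[K] y : 𝔸)
        = ((Polynomial.X : Polynomial K) ^ m * p) ⊗ₜ[K] y := smul_tmul' _ _ _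
    rw [hs, c_tmul, mul_comm, Polynomial.coeff_mul_X_pow', if_neg (by omega), zero_smul]
  | add u v hu hv => rw [smul_add, map_add, hu, hv, add_zero]

/-- Evaluation at 1. -/
def E : 𝔸 →ₗ[K] 𝕃 :=
  TensorProduct.lift ((LinearMap.lsmul K 𝕃).comp (Polynomial.leval (1 : K)))

theorem E_tmul (p : Polynomial K) (y : 𝕃) :
    E K σ (p ⊗ₜ y) = p.eval 1 • y := rfl

theorem keyZeroR (u : 𝔸) : ⁅u, (0 : 𝔸)⁆ = 0 := by
  have h := key K σ u 0 0
  rwa [zero_smul, zero_smul] at h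

theorem keyAddR (u a b : 𝔸) : ⁅u, a + b⁆ = ⁅u, a⁆ + ⁅u, b⁆ := @lie_add 𝔸 𝔸 _ _ _ u a b

theorem keyAddL (a b u : 𝔸) : ⁅a + b, u⁆ = ⁅a, u⁆ + ⁅b, u⁆ := @add_lie 𝔸 𝔸 _ _ _ a b u

theorem E_lie (u v : 𝔸) : E K σ ⁅u, v⁆ = ⁅E K σ u, E K σ v⁆ := by
  induction u using TensorProduct.induction_on with
  | zero =>
    have h0 : ⁅(0 : 𝔸), v⁆ = 0 := zero_lie v
    rw [h0, map_zero]
    exact (zero_lie _).symm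
  | tmul p x =>
    induction v using TensorProduct.induction_on with
    | zero =>
      rw [keyZeroR, map_zero]
      exact (lie_zero _).symm
    | tmul q y =>
      have hb : ⁅(p ⊗ₜ[K] x : 𝔸), q ⊗ₜ[K] y⁆ = (p * q) ⊗ₜ[K] ⁅x, y⁆ := rfl
      rw [hb, E_tmul, E_tmul, E_tmul, Polynomial.eval_mul]
      rw [mul_smul]
      calc (eval 1 p) • (eval 1 q) • ⁅x, y⁆
          = (eval 1 p) • ⁅x, (eval 1 q) • y⁆ := congrArg _ ((@lie_smul K 𝕃 𝕃 _ _ _ _ _ _ _ (eval 1 q) x y).symm)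
        _ = ⁅(eval 1 p) • x, (eval 1 q) • y⁆ :=
              (@smul_lie K 𝕃 𝕃 _ _ _ _ _ _ _ (eval 1 p) x (eval 1 q • y)).symm
    | add a b ha hb =>
      rw [keyAddR, map_add, ha, hb, map_add]
      exact (lie_add _ _ _).symm
  | add a b ha hb =>
    rw [keyAddL, map_add, ha, hb, map_add]
    exact (add_lie _ _ _).symm

/-- `E` as a Lie algebra morphism. -/
def E' : 𝔸 →ₗ⁅K⁆ 𝕃 :=
  { E K σ with map_lie' := by intro u v; exact E_lie K σ u v }

theorem E_Φ (x : 𝕃) : E K σ (Φ K σ x) = x := by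
  have h : (E' K σ).comp (Φ K σ) = LieHom.id := by
    apply (FreeLieAlgebra.lift K).symm.injective
    ext y
    simp only [FreeLieAlgebra.lift_symm_apply, LieHom.coe_comp, Function.comp_apply]
    rw [Φ_of]
    show E K σ ((Polynomial.X : Polynomial K) ⊗ₜ FreeLieAlgebra.of K y) = _
    rw [E_tmul, Polynomial.eval_X, one_smul]
    rfl
  exact congrArg (fun F => F x) h

theorem E_eq_sum (v : 𝔸) :
    ∃ N : ℕ, (∀ n, N ≤ n → c K σ n v = 0) ∧
      E K σ v = ∑ n ∈ Finset.range N, c K σ n v := by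
  induction v using TensorProduct.induction_on with
  | zero => exact ⟨0, fun n _ => by simp, by simp⟩
  | tmul p y =>
    refine ⟨p.natDegree + 1, fun n hn => ?_, ?_⟩
    · rw [c_tmul, Polynomial.coeff_eq_zero_of_natDegree_lt (by omega), zero_smul]
    · rw [E_tmul, Polynomial.eval_eq_sum_range, Finset.sum_smul]
      refine Finset.sum_congr rfl fun n _ => ?_
      rw [c_tmul, one_pow, mul_one]
  | add u v hu hv =>
    obtain ⟨N₁, h₁, e₁⟩ := hu
    obtain ⟨N₂, h₂, e₂⟩ := hv
    refine ⟨max N₁ N₂, fun n hn => ?_, ?_⟩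
    · rw [map_add, h₁ n (le_trans (le_max_left _ _) hn),
        h₂ n (le_trans (le_max_right _ _) hn), add_zero]
    · have e₁' : E K σ u = ∑ n ∈ Finset.range (max N₁ N₂), c K σ n u := by
        rw [e₁]
        exact Finset.sum_subset (Finset.range_subset_range.2 (le_max_left _ _))
          (fun n _ hn => h₁ n (by simpa using hn))
      have e₂' : E K σ v = ∑ n ∈ Finset.range (max N₁ N₂), c K σ n v := by
        rw [e₂]
        exact Finset.sum_subset (Finset.range_subset_range.2 (le_max_right _ _))
          (fun n _ hn => h₂ n (by simpa using hn))
      rw [map_add, e₁', e₂', ← Finset.sum_add_distrib]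
      exact Finset.sum_congr rfl fun n _ => (map_add _ _ _).symm

end FreeLieResNil

end

open FreeLieResNil in
/-- The free Lie algebra on any type of generators over a field is residually
nilpotent: the intersection of the terms of its lower central series is zero. -/
theorem freeLieAlgebra_residually_nilpotent
    (K : Type) [Field K] (X : Type) :
    ⨅ n : ℕ, LieModule.lowerCentralSeries K (FreeLieAlgebra K X) (FreeLieAlgebra K X) n
      = ⊥ := by
  rw [LieSubmodule.eq_bot_iff]
  intro x hx
  rw [LieSubmodule.mem_iInf] at hx
  have hc : ∀ n : ℕ, c K X n (Φ K X x) = 0 := fun n =>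
    c_J K X (Nat.lt_succ_self n) ((LieIdeal.mem_comap).mp (Φ_lcs K X n (hx n)))
  obtain ⟨N, _, hE⟩ := E_eq_sum K X (Φ K X x)
  have h0 : E K X (Φ K X x) = 0 := by
    rw [hE]
    exact Finset.sum_eq_zero fun n _ => hc n
  rwa [E_Φ] at h0
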